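/- Let a, b > 0 and λ ∈ ℝ. If X ∼ BSN(λ, 1, b), then Y = (Φ(X; λ))^{1/a} has the Kumaraswamy distribution with parameters a and b: the law of Y has density y ↦ a b y^{a−1} (1 − y^a)^{b−1} on (0, 1). -/

import Mathlib

open MeasureTheory

/-- Standard normal density. -/
noncomputable def normPdf (x : ℝ) : ℝ := Real.exp (-x ^ 2 / 2) / Real.sqrt (2 * Real.pi)

/-- Standard normal cdf. -/
noncomputable def normCdf (x : ℝ) : ℝ := ∫ t in Set.Iic x, normPdf t

/-- Skew-normal cdf with parameter `l`. -/
noncomputable def snCdf (l z : ℝ) : ℝ := ∫ t in Set.Iic z, 2 * normPdf t * normCdf (l * t)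

/-- The skew-normal measure `SN(l)`: density `x ↦ 2 φ(x) Φ(l x)`. -/
noncomputable def snMeasure (l : ℝ) : Measure ℝ :=
  volume.withDensity fun x => ENNReal.ofReal (2 * normPdf x * normCdf (l * x))

/-- The Beta function. -/
noncomputable def betaFn (a b : ℝ) : ℝ := Real.Gamma a * Real.Gamma b / Real.Gamma (a + b)

/-- The Beta skew-normal density with parameters `l`, `a`, `b`. -/
noncomputable def bsnPdf (l a b x : ℝ) : ℝ :=
  (2 / betaFn a b) * snCdf l x ^ (a - 1) * (1 - snCdf l x) ^ (b - 1) * normPdf x *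
    normCdf (l * x)

/-- The Beta skew-normal measure `BSN(l, a, b)`. -/
noncomputable def bsnMeasure (l a b : ℝ) : Measure ℝ :=
  volume.withDensity fun x => ENNReal.ofReal (bsnPdf l a b x)


open Set Filter Topology

noncomputable def snPdf (l x : ℝ) : ℝ := 2 * normPdf x * normCdf (l * x)

lemma normPdf_pos (x : ℝ) : 0 < normPdf x :=
  div_pos (Real.exp_pos _) (Real.sqrt_pos.2 (by positivity))

lemma continuous_normPdf : Continuous normPdf := by
  unfold normPdf; fun_prop

lemma normPdf_neg (x : ℝ) : normPdf (-x) = normPdf x := by simp [normPdf]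

lemma integrable_normPdf : Integrable normPdf := by
  have h : Integrable (fun x : ℝ => Real.exp (-(1/2) * x ^ 2)) := integrable_exp_neg_mul_sq (by norm_num)
  have := h.div_const (Real.sqrt (2 * Real.pi))
  refine this.congr (Eventually.of_forall fun x => ?_)
  simp [normPdf]; ring_nf

lemma integral_normPdf : ∫ x, normPdf x = 1 := by
  have h := integral_gaussian (1/2)
  have : ∫ x : ℝ, Real.exp (-(1/2) * x ^ 2) = Real.sqrt (2 * Real.pi) := by
    rw [h]; rw [show Real.pi / (1/2) = 2 * Real.pi by ring]
  unfold normPdf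
  rw [integral_div]
  rw [show (fun x : ℝ => Real.exp (-x ^ 2 / 2)) = fun x : ℝ => Real.exp (-(1/2) * x ^ 2) by
    funext x; ring_nf]
  rw [this, div_self (by positivity)]

lemma hasDerivAt_integral_Iic {g : ℝ → ℝ} (hg : Continuous g) (hgi : Integrable g) (z : ℝ) :
    HasDerivAt (fun x => ∫ t in Set.Iic x, g t) (g z) z := by
  have key : (fun x => ∫ t in Set.Iic x, g t)
      = fun x => (∫ t in (0:ℝ)..x, g t) + ∫ t in Set.Iic 0, g t := by
    funext x
    rw [← intervalIntegral.integral_Iic_sub_Iic hgi.integrableOn hgi.integrableOn]; ring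
  rw [key]
  exact (intervalIntegral.integral_hasDerivAt_right hgi.intervalIntegrable
    hg.stronglyMeasurable.stronglyMeasurableAtFilter hg.continuousAt).add_const _

lemma hasDerivAt_normCdf (x : ℝ) : HasDerivAt normCdf (normPdf x) x :=
  hasDerivAt_integral_Iic continuous_normPdf integrable_normPdf x

lemma continuous_normCdf : Continuous normCdf :=
  continuous_iff_continuousAt.2 fun x => (hasDerivAt_normCdf x).continuousAt

lemma normCdf_nonneg (x : ℝ) : 0 ≤ normCdf x :=
  setIntegral_nonneg measurableSet_Iic fun t _ => (normPdf_pos t).le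

lemma normCdf_pos (x : ℝ) : 0 < normCdf x := by
  rw [normCdf, setIntegral_pos_iff_support_of_nonneg_ae
    (Eventually.of_forall fun t => (normPdf_pos t).le) integrable_normPdf.integrableOn]
  have : Function.support normPdf ∩ Iic x = Iic x := by
    rw [inter_eq_right]; intro t _; exact (normPdf_pos t).ne'
  rw [this, Real.volume_Iic]; simp

lemma normCdf_le_one (x : ℝ) : normCdf x ≤ 1 := by
  rw [← integral_normPdf, normCdf]
  exact setIntegral_le_integral integrable_normPdf
    (Eventually.of_forall fun t => (normPdf_pos t).le)

lemma normCdf_neg_eq (x : ℝ) : normCdf (-x) = 1 - normCdf x := by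
  have h1 : normCdf (-x) = ∫ t in Set.Ioi x, normPdf t := by
    rw [normCdf, show (∫ t in Set.Iic (-x), normPdf t) = ∫ t in Set.Iic (-x), normPdf (-t) by
      exact setIntegral_congr_fun measurableSet_Iic fun t _ => (normPdf_neg t).symm,
      integral_comp_neg_Iic, neg_neg]
  have h2 := intervalIntegral.integral_Iic_add_Ioi (b := x) integrable_normPdf.integrableOn
    integrable_normPdf.integrableOn
  rw [integral_normPdf] at h2
  rw [h1, ← h2, normCdf]; ring

lemma continuous_snPdf (l : ℝ) : Continuous (snPdf l) := by
  unfold snPdf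
  exact (continuous_const.mul continuous_normPdf).mul
    (continuous_normCdf.comp (continuous_const.mul continuous_id))

lemma snPdf_pos (l x : ℝ) : 0 < snPdf l x := by
  have := normPdf_pos x; have := normCdf_pos (l * x); unfold snPdf; positivity

lemma snPdf_le (l x : ℝ) : snPdf l x ≤ 2 * normPdf x := by
  unfold snPdf
  nlinarith [normCdf_le_one (l * x), normPdf_pos x, normCdf_nonneg (l * x)]

lemma integrable_snPdf (l : ℝ) : Integrable (snPdf l) := by
  refine Integrable.mono' (integrable_normPdf.const_mul 2)
    (continuous_snPdf l).aestronglyMeasurable (Eventually.of_forall fun x => ?_)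
  rw [Real.norm_eq_abs, abs_of_pos (snPdf_pos l x)]
  exact snPdf_le l x

lemma snPdf_neg (l x : ℝ) : snPdf l (-x) = 2 * normPdf x - snPdf l x := by
  unfold snPdf
  rw [normPdf_neg, mul_neg, normCdf_neg_eq]; ring

lemma integral_snPdf (l : ℝ) : ∫ x, snPdf l x = 1 := by
  have h1 : ∫ x, snPdf l (-x) = ∫ x, snPdf l x := by
    have A : MeasurableEmbedding (fun x : ℝ => -x) :=
      (Homeomorph.neg ℝ).isClosedEmbedding.measurableEmbedding
    have h := A.integral_map (μ := volume) (g := snPdf l)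
    rw [Measure.map_neg_eq_self (volume : Measure ℝ)] at h
    exact h.symm
  have h2 : ∫ x, snPdf l (-x) = 2 - ∫ x, snPdf l x := by
    simp_rw [snPdf_neg]
    rw [integral_sub ((integrable_normPdf.const_mul 2)) (integrable_snPdf l),
      integral_const_mul, integral_normPdf]
    ring
  linarith [h1, h2]

lemma snCdf_eq (l z : ℝ) : snCdf l z = ∫ t in Set.Iic z, snPdf l t := rfl

lemma hasDerivAt_snCdf (l z : ℝ) : HasDerivAt (snCdf l) (snPdf l z) z :=
  hasDerivAt_integral_Iic (continuous_snPdf l) (integrable_snPdf l) z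

lemma continuous_snCdf (l : ℝ) : Continuous (snCdf l) :=
  continuous_iff_continuousAt.2 fun x => (hasDerivAt_snCdf l x).continuousAt

lemma snCdf_pos (l x : ℝ) : 0 < snCdf l x := by
  rw [snCdf_eq, setIntegral_pos_iff_support_of_nonneg_ae
    (Eventually.of_forall fun t => (snPdf_pos l t).le) (integrable_snPdf l).integrableOn]
  have : Function.support (snPdf l) ∩ Iic x = Iic x := by
    rw [inter_eq_right]; intro t _; exact (snPdf_pos l t).ne'
  rw [this, Real.volume_Iic]; simp

lemma snCdf_lt_one (l x : ℝ) : snCdf l x < 1 := by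
  have h2 := intervalIntegral.integral_Iic_add_Ioi (b := x) (integrable_snPdf l).integrableOn
    (integrable_snPdf l).integrableOn
  rw [integral_snPdf] at h2
  have hpos : 0 < ∫ t in Set.Ioi x, snPdf l t := by
    rw [setIntegral_pos_iff_support_of_nonneg_ae
      (Eventually.of_forall fun t => (snPdf_pos l t).le) (integrable_snPdf l).integrableOn]
    have : Function.support (snPdf l) ∩ Ioi x = Ioi x := by
      rw [inter_eq_right]; intro t _; exact (snPdf_pos l t).ne'
    rw [this, Real.volume_Ioi]; simp
  rw [snCdf_eq]; linarith

lemma snCdf_le_one (l x : ℝ) : snCdf l x ≤ 1 := (snCdf_lt_one l x).le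

lemma snCdf_strictMono (l : ℝ) : StrictMono (snCdf l) := by
  intro x y hxy
  have h := intervalIntegral.integral_Iic_sub_Iic (μ := volume) (f := snPdf l) (a := x) (b := y)
    (integrable_snPdf l).integrableOn (integrable_snPdf l).integrableOn
  have hpos : 0 < ∫ t in x..y, snPdf l t :=
    intervalIntegral.intervalIntegral_pos_of_pos ((integrable_snPdf l).intervalIntegrable)
      (snPdf_pos l) hxy
  rw [← snCdf_eq, ← snCdf_eq] at h
  linarith

lemma tendsto_snCdf_atBot (l : ℝ) : Tendsto (snCdf l) atBot (𝓝 0) := by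
  have h := intervalIntegral_tendsto_integral_Iic (μ := volume) 0
    (integrable_snPdf l).integrableOn (tendsto_id (α := ℝ))
  have key : ∀ x : ℝ, snCdf l x = snCdf l 0 - ∫ t in x..(0:ℝ), snPdf l t := by
    intro x
    rw [← intervalIntegral.integral_Iic_sub_Iic (μ := volume) (f := snPdf l)
      (integrable_snPdf l).integrableOn (integrable_snPdf l).integrableOn, ← snCdf_eq, ← snCdf_eq]
    ring
  have main : Tendsto (fun x : ℝ => snCdf l 0 - ∫ t in x..(0:ℝ), snPdf l t) atBot
      (𝓝 (snCdf l 0 - ∫ t in Set.Iic 0, snPdf l t)) := tendsto_const_nhds.sub h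
  rw [← snCdf_eq, sub_self] at main
  exact main.congr fun x => (key x).symm

lemma tendsto_snCdf_atTop (l : ℝ) : Tendsto (snCdf l) atTop (𝓝 1) := by
  have h := intervalIntegral_tendsto_integral_Ioi (μ := volume) 0
    (integrable_snPdf l).integrableOn (tendsto_id (α := ℝ))
  have key : ∀ x : ℝ, snCdf l x = snCdf l 0 + ∫ t in (0:ℝ)..x, snPdf l t := by
    intro x
    rw [← intervalIntegral.integral_Iic_sub_Iic (μ := volume) (f := snPdf l)
      (integrable_snPdf l).integrableOn (integrable_snPdf l).integrableOn, ← snCdf_eq, ← snCdf_eq]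
    ring
  have h2 := intervalIntegral.integral_Iic_add_Ioi (b := (0:ℝ)) (integrable_snPdf l).integrableOn
    (integrable_snPdf l).integrableOn
  rw [integral_snPdf] at h2
  have main : Tendsto (fun x : ℝ => snCdf l 0 + ∫ t in (0:ℝ)..x, snPdf l t) atTop
      (𝓝 (snCdf l 0 + ∫ t in Set.Ioi 0, snPdf l t)) := tendsto_const_nhds.add h
  rw [show snCdf l 0 + (∫ t in Set.Ioi 0, snPdf l t) = 1 by rw [snCdf_eq]; linarith [h2]] at main
  exact main.congr fun x => (key x).symm

lemma rpow_max_bound {u lo : ℝ} (p : ℝ) (hlo : 0 < lo) (h1 : lo ≤ u) (h2 : u ≤ 1) :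
    u ^ p ≤ max (lo ^ p) 1 := by
  rcases le_or_gt 0 p with hp | hp
  · exact le_max_of_le_right (Real.rpow_le_one (by linarith) h2 hp)
  · exact le_max_of_le_left (Real.rpow_le_rpow_of_nonpos hlo h1 hp.le)

section BSN

variable {l b : ℝ}

lemma betaFn_one_right (hb : 0 < b) : betaFn 1 b = 1 / b := by
  have hΓ : Real.Gamma b ≠ 0 := (Real.Gamma_pos_of_pos hb).ne'
  unfold betaFn
  rw [Real.Gamma_one, one_mul, add_comm, Real.Gamma_add_one hb.ne']
  rw [eq_div_iff hb.ne']
  field_simp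

lemma bsnPdf_one (hb : 0 < b) (x : ℝ) :
    bsnPdf l 1 b x = b * ((1 - snCdf l x) ^ (b - 1) * snPdf l x) := by
  unfold bsnPdf snPdf
  rw [betaFn_one_right hb, sub_self, Real.rpow_zero]
  rw [div_div_eq_mul_div, div_one, mul_one]
  ring

lemma bsnPdf_one_pos (hb : 0 < b) (x : ℝ) : 0 < bsnPdf l 1 b x := by
  rw [bsnPdf_one hb]
  have h1 : (0:ℝ) < 1 - snCdf l x := by linarith [snCdf_lt_one l x]
  exact mul_pos hb (mul_pos (Real.rpow_pos_of_pos h1 _) (snPdf_pos l x))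

lemma continuous_bsnPdf_one (hb : 0 < b) : Continuous (bsnPdf l 1 b) := by
  have : bsnPdf l 1 b = fun x => b * ((1 - snCdf l x) ^ (b - 1) * snPdf l x) :=
    funext (bsnPdf_one hb)
  rw [this]
  refine continuous_const.mul (Continuous.mul ?_ (continuous_snPdf l))
  refine (continuous_const.sub (continuous_snCdf l)).rpow_const fun x => Or.inl ?_
  have := snCdf_lt_one l x; intro h; linarith [sub_eq_zero.mp h]

lemma hasDerivAt_Gfun (hb : 0 < b) (x : ℝ) :
    HasDerivAt (fun x => 1 - (1 - snCdf l x) ^ b) (bsnPdf l 1 b x) x := by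
  have h1 : HasDerivAt (fun x => 1 - snCdf l x) (-(snPdf l x)) x :=
    (hasDerivAt_snCdf l x).const_sub 1
  have hpos : (0:ℝ) < 1 - snCdf l x := by linarith [snCdf_lt_one l x]
  have h2 := h1.rpow_const (p := b) (Or.inl hpos.ne')
  have h3 := h2.const_sub 1
  refine h3.congr_deriv ?_
  rw [bsnPdf_one hb]; ring

lemma tendsto_Gfun_atBot (hb : 0 < b) :
    Tendsto (fun x => 1 - (1 - snCdf l x) ^ b) atBot (𝓝 0) := by
  have h1 : Tendsto (fun x => 1 - snCdf l x) atBot (𝓝 1) := by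
    have := tendsto_const_nhds (x := (1:ℝ)) (f := atBot (α := ℝ)) |>.sub (tendsto_snCdf_atBot l)
    simpa using this
  have h2 : Tendsto (fun x => (1 - snCdf l x) ^ b) atBot (𝓝 ((1:ℝ) ^ b)) :=
    ((Real.continuousAt_rpow_const 1 b (Or.inl one_ne_zero)).tendsto).comp h1
  rw [Real.one_rpow] at h2
  have := tendsto_const_nhds (x := (1:ℝ)) (f := atBot (α := ℝ)) |>.sub h2
  simpa using this

lemma tendsto_Gfun_atTop (hb : 0 < b) :
    Tendsto (fun x => 1 - (1 - snCdf l x) ^ b) atTop (𝓝 1) := by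
  have h1 : Tendsto (fun x => 1 - snCdf l x) atTop (𝓝 0) := by
    have := tendsto_const_nhds (x := (1:ℝ)) (f := atTop (α := ℝ)) |>.sub (tendsto_snCdf_atTop l)
    simpa using this
  have h2 : Tendsto (fun x => (1 - snCdf l x) ^ b) atTop (𝓝 ((0:ℝ) ^ b)) :=
    ((Real.continuousAt_rpow_const 0 b (Or.inr hb.le)).tendsto).comp h1
  rw [Real.zero_rpow hb.ne'] at h2
  have := tendsto_const_nhds (x := (1:ℝ)) (f := atTop (α := ℝ)) |>.sub h2
  simpa using this

lemma integrableOn_bsnPdf_Iic (hb : 0 < b) (z : ℝ) :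
    IntegrableOn (bsnPdf l 1 b) (Set.Iic z) := by
  have hFz : (0:ℝ) < 1 - snCdf l z := by linarith [snCdf_lt_one l z]
  set C := max ((1 - snCdf l z) ^ (b - 1)) 1 with hC
  have hC0 : 0 ≤ C := le_trans zero_le_one (le_max_right _ _)
  refine Integrable.mono' (g := fun x => b * C * (2 * normPdf x))
    (((integrable_normPdf.const_mul 2).const_mul (b * C)).integrableOn)
    (continuous_bsnPdf_one hb).aestronglyMeasurable ?_
  refine (ae_restrict_iff' measurableSet_Iic).2 (Eventually.of_forall fun x hx => ?_)
  rw [Real.norm_eq_abs, abs_of_pos (bsnPdf_one_pos hb x)]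
  have hmono : snCdf l x ≤ snCdf l z := (snCdf_strictMono l).monotone hx
  have h1 : (1 - snCdf l x) ^ (b - 1) ≤ C :=
    rpow_max_bound (b - 1) hFz (by linarith) (by linarith [snCdf_pos l x])
  calc bsnPdf l 1 b x = b * ((1 - snCdf l x) ^ (b - 1) * snPdf l x) := bsnPdf_one hb x
    _ ≤ b * (C * (2 * normPdf x)) := by
        refine mul_le_mul_of_nonneg_left (mul_le_mul h1 (snPdf_le l x) (snPdf_pos l x).le hC0)
          hb.le
    _ = b * C * (2 * normPdf x) := by ring

lemma bsn_measure_Iic (hb : 0 < b) (z : ℝ) :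
    bsnMeasure l 1 b (Set.Iic z) = ENNReal.ofReal (1 - (1 - snCdf l z) ^ b) := by
  rw [bsnMeasure, withDensity_apply _ measurableSet_Iic]
  rw [← ofReal_integral_eq_lintegral_ofReal (integrableOn_bsnPdf_Iic hb z)
    (Eventually.of_forall fun x => (bsnPdf_one_pos hb x).le)]
  congr 1
  have := integral_Iic_of_hasDerivAt_of_tendsto' (a := z) (m := 0)
    (f := fun x => 1 - (1 - snCdf l x) ^ b) (f' := bsnPdf l 1 b)
    (fun x _ => hasDerivAt_Gfun hb x) (integrableOn_bsnPdf_Iic hb z) (tendsto_Gfun_atBot hb)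
  rw [this, sub_zero]

lemma bsn_measure_univ (hb : 0 < b) : bsnMeasure l 1 b Set.univ = 1 := by
  have hmono : Monotone (fun n : ℕ => Set.Iic (n : ℝ)) := fun m n hmn =>
    Set.Iic_subset_Iic.2 (by exact_mod_cast hmn)
  have hU : ⋃ n : ℕ, Set.Iic (n : ℝ) = Set.univ := by
    ext x; simp only [Set.mem_iUnion, Set.mem_Iic, Set.mem_univ, iff_true]
    exact exists_nat_ge x
  have h1 := tendsto_measure_iUnion_atTop (μ := bsnMeasure l 1 b) hmono
  rw [hU] at h1
  have h2 : Tendsto (fun n : ℕ => bsnMeasure l 1 b (Set.Iic (n : ℝ))) atTop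
      (𝓝 (ENNReal.ofReal 1)) := by
    simp_rw [bsn_measure_Iic hb]
    exact (ENNReal.continuous_ofReal.tendsto 1).comp
      ((tendsto_Gfun_atTop hb).comp tendsto_natCast_atTop_atTop)
  rw [tendsto_nhds_unique h1 h2, ENNReal.ofReal_one]

end BSN

section Kum

variable {a b : ℝ}

lemma continuous_Kfun (ha : 0 < a) (hb : 0 < b) :
    Continuous (fun y : ℝ => 1 - (1 - y ^ a) ^ b) := by
  refine continuous_const.sub (Continuous.rpow_const ?_ fun x => Or.inr hb.le)
  exact continuous_const.sub (continuous_id.rpow_const fun x => Or.inr ha.le)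

lemma hasDerivAt_Kfun (ha : 0 < a) (hb : 0 < b) {y : ℝ} (hy0 : 0 < y) (hy1 : y < 1) :
    HasDerivAt (fun y : ℝ => 1 - (1 - y ^ a) ^ b)
      (a * b * y ^ (a - 1) * (1 - y ^ a) ^ (b - 1)) y := by
  have h1 : HasDerivAt (fun y : ℝ => y ^ a) (a * y ^ (a - 1)) y :=
    Real.hasDerivAt_rpow_const (Or.inl hy0.ne')
  have h2 := h1.const_sub 1
  have hpos : (0:ℝ) < 1 - y ^ a := by
    have := Real.rpow_lt_one hy0.le hy1 ha; linarith
  have h3 := (h2.rpow_const (p := b) (Or.inl hpos.ne')).const_sub 1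
  refine h3.congr_deriv ?_; ring

lemma kumPdf_nonneg (ha : 0 < a) (hb : 0 < b) {y : ℝ} (hy0 : 0 < y) (hy1 : y < 1) :
    0 ≤ a * b * y ^ (a - 1) * (1 - y ^ a) ^ (b - 1) := by
  have hpos : (0:ℝ) < 1 - y ^ a := by
    have := Real.rpow_lt_one hy0.le hy1 ha; linarith
  have h1 := Real.rpow_pos_of_pos hy0 (a - 1)
  have h2 := Real.rpow_pos_of_pos hpos (b - 1)
  positivity

lemma integrableOn_kumPdf (ha : 0 < a) (hb : 0 < b) {c : ℝ} (hc0 : 0 < c) (hc1 : c < 1) :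
    IntegrableOn (fun y : ℝ => a * b * y ^ (a - 1) * (1 - y ^ a) ^ (b - 1)) (Set.Ioc 0 c) := by
  have hca : c ^ a < 1 := Real.rpow_lt_one hc0.le hc1 ha
  have hca0 : (0:ℝ) < 1 - c ^ a := by linarith
  set C := max ((1 - c ^ a) ^ (b - 1)) 1 with hC
  have hC0 : (0:ℝ) ≤ C := le_trans zero_le_one (le_max_right _ _)
  have hbound : Integrable (fun y : ℝ => a * b * C * y ^ (a - 1))
      (volume.restrict (Set.Ioc 0 c)) := by
    have h := intervalIntegral.intervalIntegrable_rpow' (a := 0) (b := c) (r := a - 1) (by linarith)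
    rw [intervalIntegrable_iff_integrableOn_Ioc_of_le hc0.le] at h
    exact h.const_mul _
  refine Integrable.mono' hbound (ContinuousOn.aestronglyMeasurable ?_ measurableSet_Ioc) ?_
  · intro y hy
    refine ContinuousAt.continuousWithinAt ?_
    have c1 : ContinuousAt (fun y : ℝ => y ^ (a - 1)) y :=
      Real.continuousAt_rpow_const y (a - 1) (Or.inl hy.1.ne')
    have hya : y ^ a < 1 := Real.rpow_lt_one hy.1.le (lt_of_le_of_lt hy.2 hc1) ha
    have c2 : ContinuousAt (fun y : ℝ => (1 - y ^ a) ^ (b - 1)) y := by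
      refine ContinuousAt.rpow_const ?_ (Or.inl (by linarith : (1:ℝ) - y ^ a ≠ 0))
      exact continuousAt_const.sub (Real.continuousAt_rpow_const y a (Or.inr ha.le))
    exact (continuousAt_const.mul c1).mul c2
  · refine (ae_restrict_iff' measurableSet_Ioc).2 (Eventually.of_forall fun y hy => ?_)
    have hy1 : y < 1 := lt_of_le_of_lt hy.2 hc1
    have hya : y ^ a ≤ c ^ a := Real.rpow_le_rpow hy.1.le hy.2 ha.le
    have hya0 : 0 ≤ y ^ a := Real.rpow_nonneg hy.1.le a
    have h1 : (1 - y ^ a) ^ (b - 1) ≤ C :=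
      rpow_max_bound (b - 1) hca0 (by linarith) (by linarith)
    rw [Real.norm_eq_abs, abs_of_nonneg (kumPdf_nonneg ha hb hy.1 hy1)]
    have hmul : (0:ℝ) ≤ a * b * y ^ (a - 1) := by
      have := Real.rpow_pos_of_pos hy.1 (a - 1); positivity
    calc a * b * y ^ (a - 1) * (1 - y ^ a) ^ (b - 1)
        ≤ a * b * y ^ (a - 1) * C := mul_le_mul_of_nonneg_left h1 hmul
      _ = a * b * C * y ^ (a - 1) := by ring

lemma integral_kumPdf (ha : 0 < a) (hb : 0 < b) {c : ℝ} (hc0 : 0 < c) (hc1 : c < 1) :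
    ∫ y in Set.Ioc 0 c, a * b * y ^ (a - 1) * (1 - y ^ a) ^ (b - 1)
      = 1 - (1 - c ^ a) ^ b := by
  rw [← intervalIntegral.integral_of_le hc0.le]
  rw [intervalIntegral.integral_eq_sub_of_hasDeriv_right_of_le hc0.le
    ((continuous_Kfun ha hb).continuousOn)
    (fun y hy => (hasDerivAt_Kfun ha hb hy.1 (lt_trans hy.2 hc1)).hasDerivWithinAt)
    ((intervalIntegrable_iff_integrableOn_Ioc_of_le hc0.le).2 (integrableOn_kumPdf ha hb hc0 hc1))]
  rw [Real.zero_rpow ha.ne', sub_zero, Real.one_rpow]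
  ring

lemma kum_lint_Ioc (ha : 0 < a) (hb : 0 < b) {c : ℝ} (hc0 : 0 < c) (hc1 : c < 1) :
    ∫⁻ y in Set.Ioc 0 c, ENNReal.ofReal (a * b * y ^ (a - 1) * (1 - y ^ a) ^ (b - 1))
      = ENNReal.ofReal (1 - (1 - c ^ a) ^ b) := by
  rw [← ofReal_integral_eq_lintegral_ofReal (integrableOn_kumPdf ha hb hc0 hc1)
    ((ae_restrict_iff' measurableSet_Ioc).2 (Eventually.of_forall fun y hy =>
      kumPdf_nonneg ha hb hy.1 (lt_of_le_of_lt hy.2 hc1))),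
    integral_kumPdf ha hb hc0 hc1]

lemma kum_lint_Ioo01 (ha : 0 < a) (hb : 0 < b) :
    ∫⁻ y in Set.Ioo (0:ℝ) 1, ENNReal.ofReal (a * b * y ^ (a - 1) * (1 - y ^ a) ^ (b - 1)) = 1 := by
  set ρ := volume.withDensity
    (fun y : ℝ => ENNReal.ofReal (a * b * y ^ (a - 1) * (1 - y ^ a) ^ (b - 1))) with hρ
  have hρs : ∀ s : Set ℝ, MeasurableSet s →
      ρ s = ∫⁻ y in s, ENNReal.ofReal (a * b * y ^ (a - 1) * (1 - y ^ a) ^ (b - 1)) :=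
    fun s hs => withDensity_apply _ hs
  set s : ℕ → Set ℝ := fun n => Set.Ioc 0 (1 - 1 / (n + 2)) with hs
  have hcn : ∀ n : ℕ, 0 < 1 - 1 / ((n:ℝ) + 2) ∧ 1 - 1 / ((n:ℝ) + 2) < 1 := by
    intro n
    have h2 : (0:ℝ) < (n:ℝ) + 2 := by positivity
    constructor
    · have : 1 / ((n:ℝ) + 2) ≤ 1 / 2 :=
        one_div_le_one_div_of_le two_pos (by linarith [Nat.cast_nonneg (α := ℝ) n])
      linarith
    · have : 0 < 1 / ((n:ℝ) + 2) := by positivity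
      linarith
  have hmono : Monotone s := by
    intro m n hmn
    apply Set.Ioc_subset_Ioc_right
    have h1 : (m:ℝ) + 2 ≤ (n:ℝ) + 2 := by exact_mod_cast by omega
    have h2 : (0:ℝ) < (m:ℝ) + 2 := by positivity
    have := one_div_le_one_div_of_le h2 h1
    linarith
  have hU : ⋃ n, s n = Set.Ioo (0:ℝ) 1 := by
    ext y
    simp only [hs, Set.mem_iUnion, Set.mem_Ioc, Set.mem_Ioo]
    constructor
    · rintro ⟨n, hy0, hy1⟩
      exact ⟨hy0, lt_of_le_of_lt hy1 (hcn n).2⟩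
    · rintro ⟨hy0, hy1⟩
      obtain ⟨n, hn⟩ := exists_nat_ge (1 / (1 - y))
      refine ⟨n, hy0, ?_⟩
      have h1y : (0:ℝ) < 1 - y := by linarith
      have hn2 : 1 / (1 - y) ≤ (n:ℝ) + 2 := by linarith
      have : 1 / ((n:ℝ) + 2) ≤ 1 - y := by
        rw [div_le_iff₀ (by positivity)]
        have := (div_le_iff₀ h1y).1 hn2
        linarith [mul_comm ((n:ℝ) + 2) (1 - y)]
      linarith
  have h1 := tendsto_measure_iUnion_atTop (μ := ρ) hmono
  rw [hU] at h1
  have h2 : Tendsto (fun n : ℕ => ρ (s n)) atTop (𝓝 (ENNReal.ofReal 1)) := by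
    have heq : ∀ n : ℕ, ρ (s n) = ENNReal.ofReal (1 - (1 - (1 - 1 / ((n:ℝ) + 2)) ^ a) ^ b) := by
      intro n
      rw [hρs _ measurableSet_Ioc, kum_lint_Ioc ha hb (hcn n).1 (hcn n).2]
    simp_rw [heq]
    have hc : Tendsto (fun n : ℕ => 1 - 1 / ((n:ℝ) + 2)) atTop (𝓝 1) := by
      have ht : Tendsto (fun n : ℕ => ((n:ℝ) + 2)) atTop atTop :=
        tendsto_atTop_add_const_right _ 2 tendsto_natCast_atTop_atTop
      have := ht.inv_tendsto_atTop
      simp_rw [one_div]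
      have h0 : Tendsto (fun n : ℕ => (1:ℝ) - ((n:ℝ) + 2)⁻¹) atTop (𝓝 (1 - 0)) :=
        tendsto_const_nhds.sub this
      simpa using h0
    have hKc : Tendsto (fun n : ℕ => 1 - (1 - (1 - 1 / ((n:ℝ) + 2)) ^ a) ^ b) atTop
        (𝓝 (1 - (1 - (1:ℝ) ^ a) ^ b)) :=
      ((continuous_Kfun ha hb).tendsto 1).comp hc
    rw [Real.one_rpow, sub_self, Real.zero_rpow hb.ne'] at hKc
    rw [sub_zero] at hKc
    exact (ENNReal.continuous_ofReal.tendsto 1).comp hKc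
  rw [← hρs _ measurableSet_Ioo]
  rw [tendsto_nhds_unique h1 h2, ENNReal.ofReal_one]

end Kum

/-- If `X ∼ BSN(l, 1, b)` then `Y = Φ(X; l)^{1/a}` has the Kumaraswamy
distribution with parameters `a` and `b`: its law has density
`y ↦ a b y^{a-1} (1 - y^a)^{b-1}` on `(0, 1)`. -/
theorem bsn_kumaraswamy (l a b : ℝ) (ha : 0 < a) (hb : 0 < b) :
    Measure.map (fun x => snCdf l x ^ (1 / a)) (bsnMeasure l 1 b) =
      volume.withDensity fun y =>
        ENNReal.ofReal
          (Set.indicator (Set.Ioo (0:ℝ) 1)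
            (fun y => a * b * y ^ (a - 1) * (1 - y ^ a) ^ (b - 1)) y) := by
  set kp : ℝ → ℝ := fun y => a * b * y ^ (a - 1) * (1 - y ^ a) ^ (b - 1) with hkp
  have hYcont : Continuous fun x => snCdf l x ^ (1 / a) :=
    continuous_iff_continuousAt.2 fun x =>
      (Real.continuousAt_rpow_const _ _ (Or.inr (by positivity))).comp
        (continuous_snCdf l).continuousAt
  have hYm : Measurable fun x => snCdf l x ^ (1 / a) := hYcont.measurable
  have hind : (fun y => ENNReal.ofReal ((Set.Ioo (0:ℝ) 1).indicator kp y))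
      = (Set.Ioo (0:ℝ) 1).indicator fun y => ENNReal.ofReal (kp y) := by
    funext y
    by_cases hy : y ∈ Set.Ioo (0:ℝ) 1
    · rw [Set.indicator_of_mem hy, Set.indicator_of_mem hy]
    · rw [Set.indicator_of_notMem hy, Set.indicator_of_notMem hy, ENNReal.ofReal_zero]
  have hnu : ∀ c : ℝ,
      (volume.withDensity fun y => ENNReal.ofReal ((Set.Ioo (0:ℝ) 1).indicator kp y))
        (Set.Iic c) = ∫⁻ y in Set.Ioo 0 1 ∩ Set.Iic c, ENNReal.ofReal (kp y) := by
    intro c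
    rw [withDensity_apply _ measurableSet_Iic]
    rw [show (fun y => ENNReal.ofReal ((Set.Ioo (0:ℝ) 1).indicator kp y))
      = (Set.Ioo (0:ℝ) 1).indicator fun y => ENNReal.ofReal (kp y) from hind]
    rw [lintegral_indicator measurableSet_Ioo, Measure.restrict_restrict measurableSet_Ioo]
  haveI : IsFiniteMeasure (Measure.map (fun x => snCdf l x ^ (1 / a)) (bsnMeasure l 1 b)) := by
    constructor
    rw [Measure.map_apply hYm MeasurableSet.univ, Set.preimage_univ, bsn_measure_univ hb]
    exact ENNReal.one_lt_top
  refine Measure.ext_of_Iic _ _ fun c => ?_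
  rw [Measure.map_apply hYm measurableSet_Iic, hnu c]
  rcases le_or_gt c 0 with hc0 | hc0
  · have hpre : (fun x => snCdf l x ^ (1 / a)) ⁻¹' Set.Iic c = ∅ := by
      ext x
      simp only [Set.mem_preimage, Set.mem_Iic, Set.mem_empty_iff_false, iff_false, not_le]
      exact lt_of_le_of_lt hc0 (Real.rpow_pos_of_pos (snCdf_pos l x) _)
    have hint : Set.Ioo (0:ℝ) 1 ∩ Set.Iic c = ∅ := by
      ext y
      simp only [Set.mem_inter_iff, Set.mem_Ioo, Set.mem_Iic, Set.mem_empty_iff_false, iff_false,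
        not_and]
      rintro ⟨hy0, _⟩ hyc
      linarith
    rw [hpre, hint, measure_empty]
    simp
  rcases lt_or_ge c 1 with hc1 | hc1
  · -- 0 < c < 1
    have ht0 : (0:ℝ) < c ^ a := Real.rpow_pos_of_pos hc0 a
    have ht1 : c ^ a < 1 := Real.rpow_lt_one hc0.le hc1 ha
    -- find z with snCdf l z = c ^ a
    obtain ⟨x₁, hx₁⟩ := ((tendsto_snCdf_atBot l).eventually_lt_const ht0).exists
    obtain ⟨x₂, hx₂⟩ := ((tendsto_snCdf_atTop l).eventually_const_lt ht1).exists
    have hsub := intermediate_value_Icc (min_le_max (a := x₁) (b := x₂))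
      (continuous_snCdf l).continuousOn
    have hmem : c ^ a ∈ Set.Icc (snCdf l (min x₁ x₂)) (snCdf l (max x₁ x₂)) := by
      constructor
      · exact le_trans ((snCdf_strictMono l).monotone (min_le_left x₁ x₂)) hx₁.le
      · exact le_trans hx₂.le ((snCdf_strictMono l).monotone (le_max_right x₁ x₂))
    obtain ⟨z, _, hz⟩ := hsub hmem
    have hpre : (fun x => snCdf l x ^ (1 / a)) ⁻¹' Set.Iic c = Set.Iic z := by
      ext x
      simp only [Set.mem_preimage, Set.mem_Iic]
      have key : snCdf l x ^ (1 / a) ≤ c ↔ snCdf l x ≤ c ^ a := by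
        rw [← Real.rpow_le_rpow_iff (z := a) (Real.rpow_nonneg (snCdf_pos l x).le _) hc0.le ha,
          ← Real.rpow_mul (snCdf_pos l x).le, one_div_mul_cancel ha.ne', Real.rpow_one]
      rw [key, ← hz, (snCdf_strictMono l).le_iff_le]
    have hint : Set.Ioo (0:ℝ) 1 ∩ Set.Iic c = Set.Ioc 0 c := by
      ext y
      simp only [Set.mem_inter_iff, Set.mem_Ioo, Set.mem_Iic, Set.mem_Ioc]
      constructor
      · rintro ⟨⟨h1, _⟩, h3⟩; exact ⟨h1, h3⟩
      · rintro ⟨h1, h3⟩; exact ⟨⟨h1, lt_of_le_of_lt h3 hc1⟩, h3⟩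
    rw [hpre, hint, bsn_measure_Iic hb z, hz, kum_lint_Ioc ha hb hc0 hc1]
  · -- 1 ≤ c
    have hpre : (fun x => snCdf l x ^ (1 / a)) ⁻¹' Set.Iic c = Set.univ := by
      ext x
      simp only [Set.mem_preimage, Set.mem_Iic, Set.mem_univ, iff_true]
      exact le_trans (Real.rpow_le_one (snCdf_pos l x).le (snCdf_le_one l x) (by positivity)) hc1
    have hint : Set.Ioo (0:ℝ) 1 ∩ Set.Iic c = Set.Ioo 0 1 :=
      Set.inter_eq_left.2 fun y hy => le_trans hy.2.le hc1
    rw [hpre, hint, bsn_measure_univ hb, kum_lint_Ioo01 ha hb]
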